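/- Let γ be a Dyck path of length 2n and τ_γ the 321-avoiding permutation obtained from γ via the Billey–Jockusch–Stanley bijection. Then for every j in {1,...,n}, τ_γ(j) > j if j ∈ D (the set of partial sums of descent-run lengths), and τ_γ(j) ≤ j if j ∉ D. -/

import Mathlib

private lemma lower_eq_Icc (s : Finset ℕ) (hpos : ∀ i ∈ s, 1 ≤ i)
    (h : ∀ i ∈ s, ∀ k, 1 ≤ k → k ≤ i → k ∈ s) :
    s = Finset.Icc 1 s.card := by
  have hsub : Finset.Icc 1 s.card ⊆ s := by
    intro k hk
    rw [Finset.mem_Icc] at hk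
    by_contra hks
    have hss : s ⊆ Finset.Icc 1 (k - 1) := by
      intro i hi
      rw [Finset.mem_Icc]
      refine ⟨hpos i hi, ?_⟩
      by_contra hik
      exact hks (h i hi k hk.1 (by omega))
    have := Finset.card_le_card hss
    rw [Nat.card_Icc] at this
    omega
  exact (Finset.eq_of_subset_of_card_le hsub (by rw [Nat.card_Icc]; omega)).symm

/-- Billey–Jockusch–Stanley bijection: given a Dyck path of length `2n` encoded by
the partial sums `A i` of its ascent-run lengths and `D i` of its descent-run
lengths (with `m` runs), the 321-avoiding permutation `τ` defined by
`τ (D i) = A i + 1` on `𝒟 = {D 1, …, D (m-1)}` and increasing from the complement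
of `𝒟` onto `Ā = [1,n] \ (1 + 𝒜)` satisfies: `τ j > j` when `j ∈ 𝒟` and
`τ j ≤ j` when `j ∉ 𝒟`. -/
theorem bjs_above_below_diagonal (n m : ℕ) (A D : ℕ → ℕ) (τ : ℕ → ℕ)
    (hm : 1 ≤ m) (hA0 : A 0 = 0) (hD0 : D 0 = 0)
    (hAstep : ∀ i < m, A i < A (i + 1)) (hDstep : ∀ i < m, D i < D (i + 1))
    (hAm : A m = n) (hDm : D m = n)
    (hDA : ∀ i ≤ m, D i ≤ A i)
    (hτD : ∀ i, 1 ≤ i → i ≤ m - 1 → τ (D i) = A i + 1)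
    (hτmono : ∀ j k : ℕ, j ∈ Finset.Icc 1 n → k ∈ Finset.Icc 1 n →
      j ∉ (Finset.Icc 1 (m - 1)).image D → k ∉ (Finset.Icc 1 (m - 1)).image D →
      j < k → τ j < τ k)
    (hτbij : Set.BijOn τ
      ↑(Finset.Icc 1 n \ (Finset.Icc 1 (m - 1)).image D)
      ↑(Finset.Icc 1 n \ (Finset.Icc 1 (m - 1)).image (fun i => A i + 1))) :
    ∀ j ∈ Finset.Icc 1 n,
      (j ∈ (Finset.Icc 1 (m - 1)).image D → j < τ j) ∧
      (j ∉ (Finset.Icc 1 (m - 1)).image D → τ j ≤ j) := by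
  have hAgap : ∀ k, k ≤ m → ∀ i, i ≤ k → A i + (k - i) ≤ A k := by
    intro k
    induction k with
    | zero =>
      intro _ i hi
      have : i = 0 := by omega
      subst this; omega
    | succ k ih =>
      intro hk i hi
      rcases Nat.lt_or_ge i (k + 1) with h | h
      · have h1 := ih (by omega) i (by omega)
        have h2 := hAstep k (by omega)
        omega
      · have : i = k + 1 := by omega
        subst this; omega
  have hDgap : ∀ k, k ≤ m → ∀ i, i ≤ k → D i + (k - i) ≤ D k := by
    intro k
    induction k with
    | zero =>
      intro _ i hi
      have : i = 0 := by omega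
      subst this; omega
    | succ k ih =>
      intro hk i hi
      rcases Nat.lt_or_ge i (k + 1) with h | h
      · have h1 := ih (by omega) i (by omega)
        have h2 := hDstep k (by omega)
        omega
      · have : i = k + 1 := by omega
        subst this; omega
  set Df := (Finset.Icc 1 (m - 1)).image D with hDfdef
  set Af := (Finset.Icc 1 (m - 1)).image (fun i => A i + 1) with hAfdef
  have hDinj : Set.InjOn D ↑(Finset.Icc 1 (m - 1)) := by
    intro i1 h1 i2 h2 he
    simp only [Finset.coe_Icc, Set.mem_Icc] at h1 h2
    rcases lt_trichotomy i1 i2 with h | h | h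
    · have := hDgap i2 (by omega) i1 (by omega); omega
    · exact h
    · have := hDgap i1 (by omega) i2 (by omega); omega
  have hAinj : Set.InjOn (fun i => A i + 1) ↑(Finset.Icc 1 (m - 1)) := by
    intro i1 h1 i2 h2 he
    simp only [Finset.coe_Icc, Set.mem_Icc] at h1 h2
    simp only at he
    rcases lt_trichotomy i1 i2 with h | h | h
    · have := hAgap i2 (by omega) i1 (by omega); omega
    · exact h
    · have := hAgap i1 (by omega) i2 (by omega); omega
  have hDfsub : Df ⊆ Finset.Icc 1 n := by
    intro t ht
    rw [hDfdef, Finset.mem_image] at ht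
    obtain ⟨i, hi, rfl⟩ := ht
    rw [Finset.mem_Icc] at hi ⊢
    have h1 := hDgap i (by omega) 0 (by omega)
    have h2 := hDgap m le_rfl i (by omega)
    omega
  have hAfsub : Af ⊆ Finset.Icc 1 n := by
    intro t ht
    rw [hAfdef, Finset.mem_image] at ht
    obtain ⟨i, hi, rfl⟩ := ht
    rw [Finset.mem_Icc] at hi ⊢
    have h2 := hAgap m le_rfl i (by omega)
    omega
  set S := Finset.Icc 1 n \ Df with hSdef
  set T := Finset.Icc 1 n \ Af with hTdef
  have hcardDf : Df.card = m - 1 := by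
    rw [hDfdef, Finset.card_image_of_injOn hDinj, Nat.card_Icc]; omega
  have hcardAf : Af.card = m - 1 := by
    rw [hAfdef, Finset.card_image_of_injOn hAinj, Nat.card_Icc]; omega
  have hcardST : S.card = T.card := by
    rw [hSdef, hTdef, Finset.card_sdiff_of_subset hDfsub, Finset.card_sdiff_of_subset hAfsub, hcardDf, hcardAf]
  intro j hj
  rw [Finset.mem_Icc] at hj
  constructor
  · intro hmem
    rw [hDfdef, Finset.mem_image] at hmem
    obtain ⟨i, hi, rfl⟩ := hmem
    rw [Finset.mem_Icc] at hi
    rw [hτD i hi.1 hi.2]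
    have := hDA i (by omega)
    omega
  · intro hnot
    have hjS : j ∈ S := Finset.mem_sdiff.mpr ⟨Finset.mem_Icc.mpr hj, hnot⟩
    have hxT : τ j ∈ T := Finset.mem_coe.mp (hτbij.mapsTo (Finset.mem_coe.mpr hjS))
    have hxT' := hxT
    rw [hTdef, Finset.mem_sdiff, Finset.mem_Icc] at hxT'
    obtain ⟨⟨hx1, hxn⟩, hxAf⟩ := hxT'
    set d := ((Finset.Icc 1 (m - 1)).filter (fun i => D i ≤ j)).card with hd
    set a := ((Finset.Icc 1 (m - 1)).filter (fun i => A i + 1 ≤ τ j)).card with ha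
    -- card of the ≤ part of S
    have hSle : S.filter (fun t => t ≤ j) = Finset.Icc 1 j \ Df := by
      ext t
      simp only [hSdef, Finset.mem_filter, Finset.mem_sdiff, Finset.mem_Icc]
      constructor
      · rintro ⟨⟨⟨h1, h2⟩, h3⟩, h4⟩; exact ⟨⟨h1, h4⟩, h3⟩
      · rintro ⟨⟨h1, h2⟩, h3⟩; exact ⟨⟨⟨h1, by omega⟩, h3⟩, h2⟩
    have hTle : T.filter (fun t => t ≤ τ j) = Finset.Icc 1 (τ j) \ Af := by
      ext t
      simp only [hTdef, Finset.mem_filter, Finset.mem_sdiff, Finset.mem_Icc]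
      constructor
      · rintro ⟨⟨⟨h1, h2⟩, h3⟩, h4⟩; exact ⟨⟨h1, h4⟩, h3⟩
      · rintro ⟨⟨h1, h2⟩, h3⟩; exact ⟨⟨⟨h1, by omega⟩, h3⟩, h2⟩
    have hinterD : Finset.Icc 1 j ∩ Df
        = ((Finset.Icc 1 (m - 1)).filter (fun i => D i ≤ j)).image D := by
      ext t
      simp only [hDfdef, Finset.mem_inter, Finset.mem_image, Finset.mem_Icc, Finset.mem_filter]
      constructor
      · rintro ⟨⟨h1, h2⟩, i, hi, rfl⟩; exact ⟨i, ⟨hi, h2⟩, rfl⟩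
      · rintro ⟨i, ⟨hi, hij⟩, rfl⟩
        have := hDgap i (by omega) 0 (by omega)
        exact ⟨⟨by omega, hij⟩, i, hi, rfl⟩
    have hinterA : Finset.Icc 1 (τ j) ∩ Af
        = ((Finset.Icc 1 (m - 1)).filter (fun i => A i + 1 ≤ τ j)).image (fun i => A i + 1) := by
      ext t
      simp only [hAfdef, Finset.mem_inter, Finset.mem_image, Finset.mem_Icc, Finset.mem_filter]
      constructor
      · rintro ⟨⟨h1, h2⟩, i, hi, rfl⟩; exact ⟨i, ⟨hi, h2⟩, rfl⟩
      · rintro ⟨i, ⟨hi, hij⟩, rfl⟩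
        exact ⟨⟨by omega, hij⟩, i, hi, rfl⟩
    have hkey1 : (S.filter (fun t => t ≤ j)).card + d = j := by
      rw [hSle]
      have h1 := Finset.card_sdiff_add_card_inter (Finset.Icc 1 j) Df
      rw [hinterD, Finset.card_image_of_injOn
        (hDinj.mono (Finset.coe_subset.mpr (Finset.filter_subset _ _))), Nat.card_Icc] at h1
      omega
    have hkey2 : (T.filter (fun t => t ≤ τ j)).card + a = τ j := by
      rw [hTle]
      have h1 := Finset.card_sdiff_add_card_inter (Finset.Icc 1 (τ j)) Af
      rw [hinterA, Finset.card_image_of_injOn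
        (hAinj.mono (Finset.coe_subset.mpr (Finset.filter_subset _ _))), Nat.card_Icc] at h1
      omega
    have hsplitS := Finset.card_filter_add_card_filter_not
      (s := S) (p := fun t => t ≤ j)
    have hsplitT := Finset.card_filter_add_card_filter_not
      (s := T) (p := fun t => t ≤ τ j)
    have hcard1 : (S.filter (fun t => ¬ t ≤ j)).card ≤ (T.filter (fun t => ¬ t ≤ τ j)).card := by
      apply Finset.card_le_card_of_injOn τ
      · intro s hs
        rw [Finset.mem_coe, Finset.mem_filter] at hs
        obtain ⟨hsS, hsj⟩ := hs
        have hsT : τ s ∈ T := Finset.mem_coe.mp (hτbij.mapsTo (Finset.mem_coe.mpr hsS))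
        rw [Finset.mem_coe, Finset.mem_filter]
        refine ⟨hsT, ?_⟩
        rw [hSdef, Finset.mem_sdiff] at hsS
        have := hτmono j s (Finset.mem_Icc.mpr hj) hsS.1 hnot hsS.2 (by omega)
        omega
      · intro s1 h1 s2 h2 he
        rw [Finset.mem_coe, Finset.mem_filter, hSdef, Finset.mem_sdiff] at h1 h2
        rcases lt_trichotomy s1 s2 with h | h | h
        · have := hτmono s1 s2 h1.1.1 h2.1.1 h1.1.2 h2.1.2 h
          omega
        · exact h
        · have := hτmono s2 s1 h2.1.1 h1.1.1 h2.1.2 h1.1.2 h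
          omega
    have hmain : τ j + d ≤ j + a := by omega
    by_contra hcon
    push_neg at hcon
    have hda : d < a := by omega
    have haM : a ≤ m - 1 := by
      rw [ha]
      calc ((Finset.Icc 1 (m - 1)).filter (fun i => A i + 1 ≤ τ j)).card
          ≤ (Finset.Icc 1 (m - 1)).card := Finset.card_filter_le _ _
        _ = m - 1 := by rw [Nat.card_Icc]; omega
    have hAlow := lower_eq_Icc ((Finset.Icc 1 (m - 1)).filter (fun i => A i + 1 ≤ τ j))
      (by
        intro i hi
        rw [Finset.mem_filter, Finset.mem_Icc] at hi
        omega)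
      (by
        intro i hi k hk1 hki
        rw [Finset.mem_filter, Finset.mem_Icc] at hi ⊢
        have := hAgap i (by omega) k (by omega)
        exact ⟨⟨hk1, by omega⟩, by omega⟩)
    have hDlow := lower_eq_Icc ((Finset.Icc 1 (m - 1)).filter (fun i => D i ≤ j))
      (by
        intro i hi
        rw [Finset.mem_filter, Finset.mem_Icc] at hi
        omega)
      (by
        intro i hi k hk1 hki
        rw [Finset.mem_filter, Finset.mem_Icc] at hi ⊢
        have := hDgap i (by omega) k (by omega)
        exact ⟨⟨hk1, by omega⟩, by omega⟩)
    have haA : A a + 1 ≤ τ j := by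
      have hmem : a ∈ (Finset.Icc 1 (m - 1)).filter (fun i => A i + 1 ≤ τ j) := by
        rw [hAlow, ← ha, Finset.mem_Icc]
        omega
      rw [Finset.mem_filter] at hmem
      exact hmem.2
    have hd1 : ¬ D (d + 1) ≤ j := by
      intro hle
      have hmem : d + 1 ∈ (Finset.Icc 1 (m - 1)).filter (fun i => D i ≤ j) :=
        Finset.mem_filter.mpr ⟨Finset.mem_Icc.mpr ⟨by omega, by omega⟩, hle⟩
      rw [hDlow, ← hd, Finset.mem_Icc] at hmem
      omega
    have h1 := hAgap a (by omega) (d + 1) (by omega)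
    have h2 := hDA (d + 1) (by omega)
    omega
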